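/- Let D₁, D₂ ⊆ ℂ be domains convex in the direction of the real axis with nonempty intersection, and let q : D₁ ∪ D₂ → ℂ be a continuous, sense-preserving, locally injective map with Im q(z) = Im z for all z ∈ D₁ ∪ D₂. If both D₁ ∪ D₂ and q(D₁) ∪ q(D₂) are simply connected, then P_y(D₁ ∩ D₂) = P_y(q(D₁) ∩ q(D₂)). -/

import Mathlib

open Complex Set Metric

/-- Projection of a planar set onto the imaginary axis. -/
def Py (D : Set ℂ) : Set ℝ := {a : ℝ | ∃ z ∈ D, z.im = a}

/-- `Λ_y(D)`: imaginary parts `a` such that the horizontal slice of `D` at height `a`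
is nonempty and connected. -/
def Ly (D : Set ℂ) : Set ℝ := {a : ℝ | IsConnected (D ∩ {z : ℂ | z.im = a})}

/-- Convexity in the direction of the real axis. -/
def CvxRe (D : Set ℂ) : Prop :=
  ∀ z ∈ D, ∀ w ∈ D, z.im = w.im → segment ℝ z w ⊆ D

/-- Local injectivity of `q` on `S`. -/
def LocInjOn (q : ℂ → ℂ) (S : Set ℂ) : Prop :=
  ∀ z ∈ S, ∃ U ∈ nhdsWithin z S, Set.InjOn q U

/-- horizontal slice of a planar set, at height `y`. -/
def sl (S : Set ℂ) (y : ℝ) : Set ℝ := {x : ℝ | (x : ℂ) + y * I ∈ S}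

section analysis
variable {q : ℂ → ℂ} {D : Set ℂ}

lemma im_fderiv_eq (hD : IsOpen D) (hdiff : ∀ z ∈ D, DifferentiableAt ℝ q z)
    (him : ∀ z ∈ D, (q z).im = z.im) {z : ℂ} (hz : z ∈ D) (v : ℂ) :
    ((fderiv ℝ q z) v).im = v.im := by
  have hL := (hdiff z hz).hasFDerivAt
  have h1 : HasFDerivAt (fun w => (q w).im) (Complex.imCLM.comp (fderiv ℝ q z)) z :=
    (Complex.imCLM.hasFDerivAt).comp z hL
  have h2 : HasFDerivAt (fun w : ℂ => (q w).im) Complex.imCLM z := by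
    have : (fun w : ℂ => (q w).im) =ᶠ[nhds z] (fun w : ℂ => w.im) := by
      filter_upwards [hD.mem_nhds hz] with w hw
      exact him w hw
    exact Complex.imCLM.hasFDerivAt.congr_of_eventuallyEq this
  have := h1.unique h2
  calc ((fderiv ℝ q z) v).im = (Complex.imCLM.comp (fderiv ℝ q z)) v := rfl
    _ = Complex.imCLM v := by rw [this]
    _ = v.im := rfl

lemma det_eq_re (L : ℂ →L[ℝ] ℂ) (h : ∀ v, (L v).im = v.im) :
    LinearMap.det (L.toLinearMap) = (L 1).re := by
  rw [← LinearMap.det_toMatrix Complex.basisOneI, Matrix.det_fin_two]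
  have e : ∀ w : ℂ, (LinearMap.toMatrix Complex.basisOneI Complex.basisOneI) L.toLinearMap
      = fun i j => Complex.basisOneI.repr (L (Complex.basisOneI j)) i := by
    intro w; ext i j; rw [LinearMap.toMatrix_apply]; rfl
  rw [e 0]
  simp only [Complex.coe_basisOneI_repr]
  have h0 : Complex.basisOneI 0 = 1 := by simp [Complex.basisOneI]
  have h1 : Complex.basisOneI 1 = I := by simp [Complex.basisOneI]
  rw [h0, h1]
  have hl1 : (L 1).im = 0 := by rw [h 1]; simp
  have hlI : (L I).im = 1 := by rw [h I]; simp
  simp [hl1, hlI]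

lemma hasDerivAt_u (hD : IsOpen D) (hdiff : ∀ z ∈ D, DifferentiableAt ℝ q z)
    {a x : ℝ} (hz : (x : ℂ) + a * I ∈ D) :
    HasDerivAt (fun t : ℝ => (q ((t : ℂ) + a * I)).re)
      (((fderiv ℝ q ((x : ℂ) + a * I)) 1).re) x := by
  have hι : HasDerivAt (fun t : ℝ => (t : ℂ) + a * I) 1 x := by
    simpa using (Complex.ofRealCLM.hasDerivAt (x := x)).add_const (a * I)
  have hq : HasFDerivAt q (fderiv ℝ q ((x : ℂ) + a * I)) ((x : ℂ) + a * I) :=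
    (hdiff _ hz).hasFDerivAt
  have hc : HasDerivAt (fun t : ℝ => q ((t : ℂ) + a * I))
      ((fderiv ℝ q ((x : ℂ) + a * I)) 1) x := by
    exact (hq.comp_hasDerivAt x hι)
  exact (Complex.reCLM.hasFDerivAt.comp_hasDerivAt x hc)

/-- strict monotonicity of `Re ∘ q` along horizontal segments inside `D`. -/
lemma mono_u (hD : IsOpen D) (hdiff : ∀ z ∈ D, DifferentiableAt ℝ q z)
    (hJ : ∀ z ∈ D, 0 < LinearMap.det (fderiv ℝ q z).toLinearMap)
    (him : ∀ z ∈ D, (q z).im = z.im)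
    {a x x' : ℝ} (hxx : x < x') (hseg : ∀ t ∈ Icc x x', (t : ℂ) + a * I ∈ D) :
    (q ((x : ℂ) + a * I)).re < (q ((x' : ℂ) + a * I)).re := by
  have key : StrictMonoOn (fun t : ℝ => (q ((t : ℂ) + a * I)).re) (Icc x x') := by
    apply strictMonoOn_of_deriv_pos (convex_Icc x x')
    · intro t ht
      exact ((hasDerivAt_u hD hdiff (hseg t ht)).continuousAt).continuousWithinAt
    · intro t ht
      rw [interior_Icc] at ht
      have hz := hseg t (Ioo_subset_Icc_self ht)
      rw [(hasDerivAt_u hD hdiff hz).deriv]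
      have := det_eq_re (fderiv ℝ q ((t : ℂ) + a * I))
        (im_fderiv_eq hD hdiff him hz)
      rw [← this]
      exact hJ _ hz
  exact key (left_mem_Icc.2 hxx.le) (right_mem_Icc.2 hxx.le) hxx
end analysis

lemma mem_sl_iff {S : Set ℂ} {y x : ℝ} : x ∈ sl S y ↔ (x : ℂ) + y * I ∈ S := Iff.rfl

lemma re_mem_sl {S : Set ℂ} {z : ℂ} (hz : z ∈ S) : z.re ∈ sl S z.im := by
  simp only [mem_sl_iff, Complex.re_add_im, hz]

lemma mem_Py_iff {S : Set ℂ} {a : ℝ} : a ∈ Py S ↔ (sl S a).Nonempty := by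
  constructor
  · rintro ⟨z, hz, hza⟩; exact ⟨z.re, by rw [mem_sl_iff, ← hza, Complex.re_add_im]; exact hz⟩
  · rintro ⟨x, hx⟩; exact ⟨(x : ℂ) + a * I, hx, by simp⟩

lemma sl_isOpen {S : Set ℂ} (hS : IsOpen S) (y : ℝ) : IsOpen (sl S y) :=
  hS.preimage (by continuity)

lemma Py_isOpen {S : Set ℂ} (hS : IsOpen S) : IsOpen (Py S) := by
  rw [isOpen_iff_mem_nhds]
  rintro a ⟨z, hz, hza⟩
  obtain ⟨ε, hε, hball⟩ := Metric.isOpen_iff.1 hS z hz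
  have : Set.Ioo (a - ε) (a + ε) ⊆ Py S := by
    intro y hy
    refine ⟨z + (y - a) * I, hball ?_, by simp [hza]⟩
    rw [mem_ball_iff_norm]
    simp only [add_sub_cancel_left]
    rw [← Complex.ofReal_sub, norm_mul, Complex.norm_I, mul_one, Complex.norm_real,
      Real.norm_eq_abs, abs_sub_lt_iff]
    constructor <;> [linarith [hy.1, hy.2]; linarith [hy.1, hy.2]]
  exact Filter.mem_of_superset (Ioo_mem_nhds (by linarith) (by linarith)) this

lemma sl_ordConnected {S : Set ℂ} (hS : CvxRe S) (y : ℝ) : OrdConnected (sl S y) := by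
  constructor
  rintro x hx x' hx' t ht
  rcases eq_or_lt_of_le ht.1 with rfl | h1
  · exact hx
  rcases eq_or_lt_of_le ht.2 with rfl | h2
  · exact hx'
  have hseg := hS _ hx _ hx' (by simp)
  apply hseg
  have hne : x < x' := lt_trans h1 h2
  have hd : (0:ℝ) < x' - x := by linarith
  refine ⟨(x' - t) / (x' - x), (t - x) / (x' - x),
    div_nonneg (by linarith) hd.le, div_nonneg (by linarith) hd.le, by field_simp; ring, ?_⟩
  rw [Complex.real_smul, Complex.real_smul]
  have hxx : ((x' : ℝ) - x : ℂ) ≠ 0 := by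
    exact_mod_cast sub_ne_zero.2 (hne.ne' : (x':ℝ) ≠ x)
  push_cast
  rw [div_mul_eq_mul_div, div_mul_eq_mul_div, ← add_div, div_eq_iff hxx]
  ring
lemma Py_ordConnected {S : Set ℂ} (hS : IsPreconnected S) : OrdConnected (Py S) := by
  have : Py S = Complex.im '' S := by
    ext a; constructor
    · rintro ⟨z, hz, hza⟩; exact ⟨z, hz, hza⟩
    · rintro ⟨z, hz, hza⟩; exact ⟨z, hz, hza⟩
  rw [this]
  exact (hS.image _ Complex.continuous_im.continuousOn).ordConnected

/-- two disjoint nonempty ord-connected subsets of ℝ are pointwise ordered one way. -/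
lemma ordConn_disjoint_order {A B : Set ℝ} (hA : OrdConnected A) (hB : OrdConnected B)
    (hd : A ∩ B = ∅) (a₀ : ℝ) (ha₀ : a₀ ∈ A) (b₀ : ℝ) (hb₀ : b₀ ∈ B) :
    (∀ a ∈ A, ∀ b ∈ B, a < b) ∨ (∀ a ∈ A, ∀ b ∈ B, b < a) := by
  have hdis : ∀ x, x ∈ A → x ∈ B → False := by
    intro x h1 h2; have : x ∈ A ∩ B := ⟨h1, h2⟩; rw [hd] at this; exact this
  have hne : a₀ ≠ b₀ := fun h => hdis a₀ ha₀ (h ▸ hb₀)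
  rcases hne.lt_or_gt with h | h
  · left
    intro a ha b hb
    by_contra hab
    push_neg at hab
    -- b ≤ a
    rcases le_or_gt a a₀ with h1 | h1
    · -- b ≤ a ≤ a₀ ... b < b₀? b ∈ [b, b₀] ∋ a₀? cases
      rcases le_or_gt b a₀ with h2 | h2
      · -- b ≤ a₀ < b₀, so a₀ ∈ [b, b₀] ⊆ B
        exact hdis a₀ ha₀ (hB.out hb hb₀ ⟨h2, h.le⟩)
      · -- a₀ < b ≤ a: b ∈ [a₀, a] ⊆ A
        exact hdis b (hA.out ha₀ ha ⟨h2.le, hab⟩) hb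
    · -- a₀ < a; if b ≥ a₀ then b ∈ [a₀,a] ⊆ A; else b < a₀ < b₀ so a₀ ∈ [b,b₀] ⊆ B
      rcases le_or_gt a₀ b with h2 | h2
      · exact hdis b (hA.out ha₀ ha ⟨h2, hab⟩) hb
      · exact hdis a₀ ha₀ (hB.out hb hb₀ ⟨h2.le, h.le⟩)
  · right
    intro a ha b hb
    by_contra hab
    push_neg at hab
    -- hab : a ≤ b, and b₀ < a₀
    rcases le_or_gt a b₀ with h2 | h2
    · -- a ≤ b₀ < a₀ so b₀ ∈ [a, a₀]? no: a ≤ b₀, b₀ < a₀ ⇒ b₀ ∈ [a,a₀] ⊆ A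
      exact hdis b₀ (hA.out ha ha₀ ⟨h2, h.le⟩) hb₀
    · -- b₀ < a ≤ b so a ∈ [b₀, b] ⊆ B
      exact hdis a ha (hB.out hb₀ hb ⟨h2.le, hab⟩)

/-- gap point between two disjoint nonempty open ord-connected sets `A < B`. -/
lemma gap_point {A B : Set ℝ} (hA : OrdConnected A) (hB : OrdConnected B)
    (hAo : IsOpen A) (hBo : IsOpen B)
    (hAne : A.Nonempty) (hBne : B.Nonempty)
    (horder : ∀ a ∈ A, ∀ b ∈ B, a < b) :
    ∃ x₀ : ℝ, (∀ a ∈ A, a < x₀) ∧ (∀ b ∈ B, x₀ < b) := by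
  obtain ⟨b₀, hb₀⟩ := hBne
  have hbdd : BddAbove A := ⟨b₀, fun a ha => (horder a ha b₀ hb₀).le⟩
  set x₀ := sSup A with hx₀
  have hx₀A : x₀ ∉ A := by
    intro h
    obtain ⟨ε, hε, hball⟩ := Metric.isOpen_iff.1 hAo x₀ h
    have : x₀ + ε / 2 ∈ A := by
      apply hball
      rw [mem_ball, Real.dist_eq, add_sub_cancel_left, abs_of_pos (by linarith)]
      linarith
    have := le_csSup hbdd this
    linarith
  have hx₀B : x₀ ∉ B := by
    intro h
    obtain ⟨ε, hε, hball⟩ := Metric.isOpen_iff.1 hBo x₀ h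
    obtain ⟨a, ha, hax⟩ := Real.add_neg_lt_sSup hAne (show -(ε/2) < 0 by linarith)
    have haB : a ∈ B := by
      apply hball
      rw [mem_ball, Real.dist_eq, abs_sub_lt_iff]
      have : a ≤ x₀ := le_csSup hbdd ha
      constructor <;> [linarith; linarith]
    exact absurd (horder a ha a haB) (lt_irrefl a)
  refine ⟨x₀, ?_, ?_⟩
  · intro a ha
    exact lt_of_le_of_ne (le_csSup hbdd ha) (fun h => hx₀A (h ▸ ha))
  · intro b hb
    have : x₀ ≤ b := csSup_le hAne (fun a ha => (horder a ha b hb).le)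
    exact lt_of_le_of_ne this (fun h => hx₀B (h ▸ hb))

lemma fn_ne_zero {m : ℝ} (hm : 0 < m) {w : ℂ} (h : m ≤ ‖w‖) : w ≠ 0 := by
  intro h0; rw [h0] at h; simp at h; linarith

lemma exp_telescope (n : ℕ) (a : ℕ → ℂ) (h : ∀ k, k ≤ n → a k ≠ 0) :
    Complex.exp (∑ j ∈ Finset.range n, Complex.log (a (j + 1) / a j)) = a n / a 0 := by
  induction n with
  | zero => simp [div_self (h 0 le_rfl)]
  | succ n ih =>
    rw [Finset.sum_range_succ, Complex.exp_add,
      ih (fun k hk => h k (hk.trans n.le_succ)),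
      Complex.exp_log (div_ne_zero (h (n+1) le_rfl) (h n n.le_succ))]
    field_simp
    rw [mul_div_mul_left _ _ (h n n.le_succ)]

lemma min_lip (s a b : ℝ) : |min s a - min s b| ≤ |a - b| := by
  wlog h : b ≤ a generalizing a b
  · rw [abs_sub_comm, abs_sub_comm a b]; exact this _ _ (le_of_not_ge h)
  have h1 : min s b ≤ min s a := min_le_min le_rfl h
  rw [_root_.abs_of_nonneg (sub_nonneg.2 h1), _root_.abs_of_nonneg (sub_nonneg.2 h)]
  rcases le_total s b with h2 | h2
  · rw [min_eq_left (h2.trans h), min_eq_left h2]; linarith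
  · rw [min_eq_right h2]
    rcases le_total s a with h3 | h3
    · rw [min_eq_left h3]; linarith
    · rw [min_eq_right h3]

lemma log_ratio_continuous {g h : ℝ × ℝ → ℂ} {m : ℝ} (hm : 0 < m)
    (hgc : Continuous g) (hhc : Continuous h)
    (hcl : ∀ st, ‖g st - h st‖ < m) (hbd : ∀ st, m ≤ ‖h st‖) :
    Continuous fun st => Complex.log (g st / h st) := by
  rw [continuous_iff_continuousAt]
  intro st
  have hhne : h st ≠ 0 := fn_ne_zero hm (hbd st)
  have habs : ‖g st / h st - 1‖ < 1 := by
    rw [show g st / h st - 1 = (g st - h st) / h st by field_simp, norm_div, div_lt_one]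
    · exact lt_of_lt_of_le (hcl st) (hbd st)
    · linarith [hbd st]
  have hre : 0 < (g st / h st).re := by
    have := Complex.abs_re_le_norm (g st / h st - 1)
    rw [Complex.sub_re, Complex.one_re] at this
    have h3 : |(g st / h st).re - 1| < 1 := lt_of_le_of_lt this habs
    linarith [(abs_lt.1 h3).1]
  exact ((hgc.div hhc fun x => fn_ne_zero hm (hbd x)).continuousAt).clog (Or.inl hre)

/-- Continuous logarithm of a nonvanishing uniformly continuous function, over the unit square. -/
lemma sqlift (f : ℝ × ℝ → ℂ) (hf : UniformContinuous f) (m : ℝ) (hm : 0 < m)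
    (hbd : ∀ st : ℝ × ℝ, m ≤ ‖f st‖) :
    ∃ G : ℝ × ℝ → ℂ, Continuous G ∧ ∀ s ∈ Icc (0:ℝ) 1, ∀ t ∈ Icc (0:ℝ) 1,
      Complex.exp (G (s, t)) = f (s, t) := by
  obtain ⟨δ, hδ, hδf⟩ := Metric.uniformContinuous_iff.1 hf m hm
  set N : ℕ := ⌈1/δ⌉₊ + 1 with hN
  have hNpos : 0 < (N : ℝ) := by positivity
  have hNδ : 1 / (N : ℝ) < δ := by
    rw [div_lt_iff₀ hNpos, ← div_lt_iff₀' hδ]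
    calc 1/δ ≤ (⌈1/δ⌉₊ : ℝ) := Nat.le_ceil _
    _ < N := by rw [hN]; push_cast; linarith
  have key : ∀ a b : ℝ × ℝ, dist a b ≤ 1 / N → dist (f a) (f b) < m :=
    fun a b hab => hδf (lt_of_le_of_lt hab hNδ)
  set B : ℕ → ℝ × ℝ → ℂ := fun j st => f (min st.1 ((j : ℝ) / N), 0) with hB
  set A : ℕ → ℝ × ℝ → ℂ := fun k st => f (st.1, min st.2 ((k : ℝ) / N)) with hA
  have hBc : ∀ j, Continuous (B j) := fun j =>
    hf.continuous.comp ((continuous_fst.min continuous_const).prodMk continuous_const)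
  have hAc : ∀ k, Continuous (A k) := fun k =>
    hf.continuous.comp (continuous_fst.prodMk (continuous_snd.min continuous_const))
  have hBd : ∀ j st, m ≤ ‖B j st‖ := fun j st => hbd _
  have hAd : ∀ k st, m ≤ ‖A k st‖ := fun k st => hbd _
  have hBcl : ∀ j (st : ℝ × ℝ), ‖B (j+1) st - B j st‖ < m := by
    intro j st
    have := key (min st.1 (((j:ℝ)+1) / N), 0) (min st.1 ((j:ℝ) / N), 0) ?_
    · simpa [hB, Complex.dist_eq] using this
    · rw [Prod.dist_eq]
      simp only [dist_self, Real.dist_eq]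
      rw [max_le_iff]
      refine ⟨(min_lip _ _ _).trans ?_, by positivity⟩
      rw [show ((j:ℝ)+1)/N - (j:ℝ)/N = 1/N by ring, abs_of_pos (by positivity)]
  have hAcl : ∀ k (st : ℝ × ℝ), ‖A (k+1) st - A k st‖ < m := by
    intro k st
    have := key (st.1, min st.2 (((k:ℝ)+1) / N)) (st.1, min st.2 ((k:ℝ) / N)) ?_
    · simpa [hA, Complex.dist_eq] using this
    · rw [Prod.dist_eq]
      simp only [dist_self, Real.dist_eq]
      rw [max_le_iff]
      refine ⟨by positivity, (min_lip _ _ _).trans ?_⟩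
      rw [show ((k:ℝ)+1)/N - (k:ℝ)/N = 1/N by ring, abs_of_pos (by positivity)]
  refine ⟨fun st => Complex.log (f (0,0))
    + ∑ j ∈ Finset.range N, Complex.log (B (j+1) st / B j st)
    + ∑ k ∈ Finset.range N, Complex.log (A (k+1) st / A k st), ?_, ?_⟩
  · apply Continuous.add
    apply Continuous.add continuous_const
    · exact continuous_finset_sum _ fun j _ =>
        log_ratio_continuous hm (hBc (j+1)) (hBc j) (hBcl j) (hBd j)
    · exact continuous_finset_sum _ fun k _ =>
        log_ratio_continuous hm (hAc (k+1)) (hAc k) (hAcl k) (hAd k)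
  · intro s hs t ht
    rw [Complex.exp_add, Complex.exp_add,
      exp_telescope N (fun j => B j (s,t)) (fun k _ => fn_ne_zero hm (hBd k (s,t))),
      exp_telescope N (fun k => A k (s,t)) (fun k _ => fn_ne_zero hm (hAd k (s,t))),
      Complex.exp_log (fn_ne_zero hm (hbd (0,0)))]
    have hNne : (N : ℝ) ≠ 0 := ne_of_gt hNpos
    have hfne : ∀ st : ℝ × ℝ, f st ≠ 0 := fun st => fn_ne_zero hm (hbd st)
    show f (0,0) * (B N (s,t) / B 0 (s,t)) * (A N (s,t) / A 0 (s,t)) = f (s,t)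
    have eB1 : B N (s,t) = f (s, 0) := by
      simp only [hB, div_self hNne]; rw [min_eq_left hs.2]
    have eB0 : B 0 (s,t) = f (0, 0) := by
      simp only [hB, Nat.cast_zero, zero_div]; rw [min_eq_right hs.1]
    have eA1 : A N (s,t) = f (s, t) := by
      simp only [hA, div_self hNne]; rw [min_eq_left ht.2]
    have eA0 : A 0 (s,t) = f (s, 0) := by
      simp only [hA, Nat.cast_zero, zero_div]; rw [min_eq_right ht.1]
    rw [eB1, eB0, eA1, eA0]
    field_simp
    exact mul_div_cancel_left₀ _ (mul_ne_zero (hfne 0) (hfne (s,0)))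

noncomputable def l₁ (p z : ℂ) : ℂ := Complex.log (p - z) + Real.pi * I
noncomputable def l₂ (p z : ℂ) : ℂ := Complex.log (z - p)

lemma exp_l₁ {p z : ℂ} (h : z ≠ p) : Complex.exp (l₁ p z) = z - p := by
  rw [l₁, Complex.exp_add, Complex.exp_log (sub_ne_zero.2 (Ne.symm h)), Complex.exp_pi_mul_I]
  ring

lemma exp_l₂ {p z : ℂ} (h : z ≠ p) : Complex.exp (l₂ p z) = z - p := by
  rw [l₂, Complex.exp_log (sub_ne_zero.2 h)]

lemma l₁_continuousAt {p z : ℂ} (h : z.im ≠ p.im ∨ z.re < p.re) :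
    ContinuousAt (l₁ p) z := by
  apply ContinuousAt.add _ continuousAt_const
  apply ContinuousAt.clog (continuous_const.sub continuous_id).continuousAt
  rcases h with h | h
  · exact Or.inr (show (p - z).im ≠ 0 by simp only [Complex.sub_im, id_eq]; intro hh; apply h; linarith)
  · exact Or.inl (show 0 < (p - z).re by simp only [Complex.sub_re, id_eq]; linarith)

lemma l₂_continuousAt {p z : ℂ} (h : z.im ≠ p.im ∨ p.re < z.re) :
    ContinuousAt (l₂ p) z := by
  apply ContinuousAt.clog (continuous_id.sub continuous_const).continuousAt
  rcases h with h | h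
  · exact Or.inr (show (z - p).im ≠ 0 by simp only [Complex.sub_im, id_eq]; intro hh; apply h; linarith)
  · exact Or.inl (show 0 < (z - p).re by simp only [Complex.sub_re, id_eq]; linarith)

lemma arg_mem_Ioo_of_im_pos {w : ℂ} (h : 0 < w.im) : w.arg ∈ Set.Ioo 0 Real.pi := by
  constructor
  · rcases lt_trichotomy w.arg 0 with h1 | h1 | h1
    · exact absurd (Complex.arg_neg_iff.1 h1) (by linarith)
    · exfalso
      have := (Complex.arg_eq_zero_iff).1 h1
      linarith [this.2]
    · exact h1
  · rcases eq_or_lt_of_le (Complex.arg_le_pi w) with h1 | h1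
    · exact absurd ((Complex.arg_eq_pi_iff).1 h1).2 (by linarith)
    · exact h1

lemma int_eq_zero_of_abs_lt {n : ℤ} (h1 : -(1:ℝ)/2 < (n:ℝ)) (h2 : (n:ℝ) < 1/2) : n = 0 := by
  have ha : (-1 : ℤ) < n := by exact_mod_cast (by push_cast; linarith : ((-1:ℤ):ℝ) < n)
  have hb : n < 1 := by exact_mod_cast (by push_cast; linarith : ((n:ℤ):ℝ) < ((1:ℤ):ℝ))
  omega

lemma l₁_eq_l₂_above {p z : ℂ} (h : p.im < z.im) : l₁ p z = l₂ p z := by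
  have hz : z ≠ p := fun hh => by rw [hh] at h; exact lt_irrefl _ h
  obtain ⟨n, hn⟩ := Complex.exp_eq_exp_iff_exists_int.1 ((exp_l₁ hz).trans (exp_l₂ hz).symm)
  have him1 : (l₁ p z).im = (p - z).arg + Real.pi := by simp [l₁, Complex.log_im]
  have him2 : (l₂ p z).im = (z - p).arg := by simp [l₂, Complex.log_im]
  have h1 : (p - z).arg ∈ Set.Ioo (-Real.pi) 0 :=
    ⟨Complex.neg_pi_lt_arg _, Complex.arg_neg_iff.2 (by simp [Complex.sub_im]; linarith)⟩
  have h2 : (z - p).arg ∈ Set.Ioo 0 Real.pi :=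
    arg_mem_Ioo_of_im_pos (by simp [Complex.sub_im]; linarith)
  have him : (l₁ p z).im = (l₂ p z).im + n * (2 * Real.pi) := by
    rw [hn]; simp
  have key : (n : ℝ) * (2 * Real.pi) = ((p-z).arg + Real.pi) - (z-p).arg := by
    rw [← him1, ← him2]; linarith [him]
  have hπ := Real.pi_pos
  have hn0 : n = 0 := by
    apply int_eq_zero_of_abs_lt
    · nlinarith [h1.1, h1.2, h2.1, h2.2]
    · nlinarith [h1.1, h1.2, h2.1, h2.2]
  rw [hn, hn0]; simp

lemma l₁_eq_l₂_below {p z : ℂ} (h : z.im < p.im) :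
    l₁ p z = l₂ p z + 2 * Real.pi * I := by
  have hz : z ≠ p := fun hh => by rw [hh] at h; exact lt_irrefl _ h
  obtain ⟨n, hn⟩ := Complex.exp_eq_exp_iff_exists_int.1 ((exp_l₁ hz).trans (exp_l₂ hz).symm)
  have him1 : (l₁ p z).im = (p - z).arg + Real.pi := by simp [l₁, Complex.log_im]
  have him2 : (l₂ p z).im = (z - p).arg := by simp [l₂, Complex.log_im]
  have h1 : (p - z).arg ∈ Set.Ioo 0 Real.pi :=
    arg_mem_Ioo_of_im_pos (by simp [Complex.sub_im]; linarith)
  have h2 : (z - p).arg ∈ Set.Ioo (-Real.pi) 0 :=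
    ⟨Complex.neg_pi_lt_arg _, Complex.arg_neg_iff.2 (by simp [Complex.sub_im]; linarith)⟩
  have him : (l₁ p z).im = (l₂ p z).im + n * (2 * Real.pi) := by
    rw [hn]; simp
  have hn1 : n = 1 := by
    have hπ := Real.pi_pos
    have key : (n : ℝ) * (2 * Real.pi) = (p-z).arg + Real.pi - (z-p).arg := by
      rw [← him1, ← him2]; linarith [him]
    have hlow : Real.pi < (n:ℝ) * (2*Real.pi) := by rw [key]; nlinarith [h1.1, h2.2]
    have hhigh : (n:ℝ) * (2*Real.pi) < 3 * Real.pi := by rw [key]; nlinarith [h1.2, h2.1]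
    have ha : (0:ℤ) < n := by
      by_contra hc
      push_neg at hc
      have : (n:ℝ) ≤ 0 := by exact_mod_cast hc
      nlinarith
    have hb : n < 2 := by
      by_contra hc
      push_neg at hc
      have : (2:ℝ) ≤ (n:ℝ) := by exact_mod_cast hc
      nlinarith
    omega
  rw [hn, hn1]
  push_cast
  ring

/-- two continuous `exp`-lifts of the same function differ by a constant on `[0,1]`. -/
lemma lift_const_diff (u v : ℝ → ℂ) (hu : ContinuousOn u (Icc 0 1)) (hv : ContinuousOn v (Icc 0 1))
    (h : ∀ t ∈ Icc (0:ℝ) 1, Complex.exp (u t) = Complex.exp (v t)) :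
    u 1 - v 1 = u 0 - v 0 := by
  have hrep : ∀ t ∈ Icc (0:ℝ) 1, ∃ n : ℤ, u t - v t = n * (2 * Real.pi * I) := by
    intro t ht
    obtain ⟨n, hn⟩ := Complex.exp_eq_exp_iff_exists_int.1 (h t ht)
    exact ⟨n, by rw [hn]; ring⟩
  set φ : ℝ → ℝ := fun t => (u t - v t).im with hφ
  have hφc : ContinuousOn φ (Icc 0 1) :=
    Complex.continuous_im.comp_continuousOn (hu.sub hv)
  have hK : IsPreconnected (φ '' Icc 0 1) := (isPreconnected_Icc).image φ hφc
  have h0 : (0:ℝ) ∈ Icc (0:ℝ) 1 := by norm_num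
  have h1 : (1:ℝ) ∈ Icc (0:ℝ) 1 := by norm_num
  obtain ⟨n0, hn0⟩ := hrep 0 h0
  obtain ⟨n1, hn1⟩ := hrep 1 h1
  have hφ0 : φ 0 = n0 * (2 * Real.pi) := by rw [hφ]; simp [hn0]
  have hφ1 : φ 1 = n1 * (2 * Real.pi) := by rw [hφ]; simp [hn1]
  have heq : n0 = n1 := by
    by_contra hne
    have hπ := Real.pi_pos
    -- find a point with non-multiple value between
    set k : ℤ := min n0 n1 with hk
    have hkk : (k:ℝ) * (2*Real.pi) + Real.pi ∈ uIcc (φ 0) (φ 1) := by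
      rw [Set.mem_uIcc]
      rcases min_cases n0 n1 with ⟨hm, hmle⟩ | ⟨hm, hmlt⟩
      · left
        rw [hφ0, hφ1, hk, hm]
        have : n0 + 1 ≤ n1 := by omega
        have : (n0:ℝ) + 1 ≤ (n1:ℝ) := by exact_mod_cast this
        constructor <;> nlinarith
      · right
        rw [hφ0, hφ1, hk, hm]
        have : n1 + 1 ≤ n0 := by omega
        have : (n1:ℝ) + 1 ≤ (n0:ℝ) := by exact_mod_cast this
        constructor <;> nlinarith
    have hmem : (k:ℝ) * (2*Real.pi) + Real.pi ∈ φ '' Icc 0 1 := by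
      apply hK.ordConnected.uIcc_subset ⟨0, h0, rfl⟩ ⟨1, h1, rfl⟩ hkk
    obtain ⟨t, ht, hφt⟩ := hmem
    obtain ⟨nt, hnt⟩ := hrep t ht
    have : φ t = nt * (2*Real.pi) := by rw [hφ]; simp [hnt]
    rw [this] at hφt
    have hπ0 : Real.pi ≠ 0 := Real.pi_ne_zero
    have : (2*nt : ℝ) = 2*k + 1 := by
      have := hφt
      field_simp at this ⊢
      nlinarith [this]
    have : (2*nt : ℤ) = 2*k + 1 := by exact_mod_cast this
    omega
  rw [hn0, hn1, heq]

lemma core_contradiction (E₁ E₂ : Set ℂ) (h₁p : IsPathConnected E₁) (h₂p : IsPathConnected E₂)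
    (p : ℂ) (hp : p ∉ E₁ ∪ E₂)
    (h₁left : ∀ z ∈ E₁, z.im = p.im → z.re < p.re)
    (h₂right : ∀ z ∈ E₂, z.im = p.im → p.re < z.re)
    (w₁ w₃ : ℂ) (hw₁ : w₁ ∈ E₁ ∩ E₂) (hw₃ : w₃ ∈ E₁ ∩ E₂)
    (h₁im : w₁.im < p.im) (h₃im : p.im < w₃.im)
    (hsc : SimplyConnectedSpace ↥(E₁ ∪ E₂)) : False := by
  classical
  obtain ⟨γ₁, hγ₁⟩ := h₁p.joinedIn w₁ hw₁.1 w₃ hw₃.1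
  obtain ⟨γ₂, hγ₂⟩ := h₂p.joinedIn w₁ hw₁.2 w₃ hw₃.2
  set E : Set ℂ := E₁ ∪ E₂ with hE
  have hmem₁ : ∀ t, γ₁ t ∈ E := fun t => Or.inl (hγ₁ t)
  have hmem₂ : ∀ t, γ₂ t ∈ E := fun t => Or.inr (hγ₂ t)
  set a₁ : ↥E := ⟨w₁, Or.inl hw₁.1⟩ with ha₁
  set a₃ : ↥E := ⟨w₃, Or.inl hw₃.1⟩ with ha₃
  set Γ₁ : Path a₁ a₃ :=
    { toFun := fun t => ⟨γ₁ t, hmem₁ t⟩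
      continuous_toFun := γ₁.continuous.subtype_mk _
      source' := by simp [ha₁]
      target' := by simp [ha₃] } with hΓ₁
  set Γ₂ : Path a₁ a₃ :=
    { toFun := fun t => ⟨γ₂ t, hmem₂ t⟩
      continuous_toFun := γ₂.continuous.subtype_mk _
      source' := by simp [ha₁]
      target' := by simp [ha₃] } with hΓ₂
  obtain ⟨H⟩ := SimplyConnectedSpace.paths_homotopic Γ₁ Γ₂
  -- the function to lift
  set pI : ℝ → unitInterval := Set.projIcc 0 1 zero_le_one with hpI
  set F : ℝ × ℝ → ℂ := fun st => ((H (pI st.1, pI st.2) : ↥E) : ℂ) - p with hF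
  have hFmem : ∀ st : ℝ × ℝ, ((H (pI st.1, pI st.2) : ↥E) : ℂ) ∈ E := fun st =>
    (H (pI st.1, pI st.2)).2
  have hFne : ∀ st, F st ≠ 0 := by
    intro st h0
    rw [hF, sub_eq_zero] at h0
    exact hp (h0 ▸ hFmem st)
  -- uniform continuity
  have hπuc : UniformContinuous (fun st : ℝ × ℝ => (pI st.1, pI st.2)) := by
    apply UniformContinuous.prodMk
    · exact (LipschitzWith.projIcc zero_le_one).uniformContinuous.comp uniformContinuous_fst
    · exact (LipschitzWith.projIcc zero_le_one).uniformContinuous.comp uniformContinuous_snd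
  have hguc : UniformContinuous (fun x : unitInterval × unitInterval => ((H x : ↥E) : ℂ) - p) :=
    CompactSpace.uniformContinuous_of_continuous
      ((continuous_subtype_val.comp H.continuous).sub continuous_const)
  have hFuc : UniformContinuous F := hguc.comp hπuc
  -- lower bound
  obtain ⟨x₀, -, hx₀⟩ := isCompact_univ.exists_isMinOn (univ_nonempty)
    (Continuous.continuousOn (by
      exact continuous_norm.comp ((continuous_subtype_val.comp H.continuous).sub
        continuous_const) : Continuous fun x : unitInterval × unitInterval =>
          ‖((H x : ↥E) : ℂ) - p‖))
  set m : ℝ := ‖((H x₀ : ↥E) : ℂ) - p‖ with hm'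
  have hm : 0 < m := by
    rw [hm']
    rcases eq_or_lt_of_le (norm_nonneg (((H x₀ : ↥E) : ℂ) - p)) with h0 | h0
    · exfalso
      have := norm_eq_zero.1 h0.symm
      rw [sub_eq_zero] at this
      exact hp (this ▸ (H x₀).2)
    · exact h0
  have hbd : ∀ st : ℝ × ℝ, m ≤ ‖F st‖ := fun st =>
    isMinOn_iff.1 hx₀ (pI st.1, pI st.2) (mem_univ _)
  obtain ⟨G, hGc, hGe⟩ := sqlift F hFuc m hm hbd
  -- boundary values of H
  have hpI0 : pI 0 = 0 := by
    rw [hpI]; ext; simp [Set.projIcc]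
  have hpI1 : pI 1 = 1 := by
    rw [hpI]; ext; simp [Set.projIcc]
  have hHs : ∀ s : unitInterval, H (s, 0) = a₁ := fun s => H.source s
  have hHt : ∀ s : unitInterval, H (s, 1) = a₃ := fun s => H.target s
  have hH0 : ∀ t : unitInterval, H (0, t) = Γ₁ t := fun t => H.apply_zero t
  have hH1 : ∀ t : unitInterval, H (1, t) = Γ₂ t := fun t => H.apply_one t
  have hIcc : ∀ t : ℝ, t ∈ Icc (0:ℝ) 1 → ∀ s : ℝ, s ∈ Icc (0:ℝ) 1 → True := fun _ _ _ _ => trivial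
  have h0m : (0:ℝ) ∈ Icc (0:ℝ) 1 := by norm_num
  have h1m : (1:ℝ) ∈ Icc (0:ℝ) 1 := by norm_num
  -- (a) bottom edge: G (1,0) = G (0,0)
  have ea : G (1, 0) - G (0,0) = G (0,0) - G (0,0) := by
    apply lift_const_diff (fun s => G (s, 0)) (fun _ => G (0,0))
      (hGc.comp (continuous_id.prodMk continuous_const)).continuousOn
      continuousOn_const
    intro s hs
    rw [hGe s hs 0 h0m, hGe 0 h0m 0 h0m]
    show F (s, 0) = F (0, 0)
    rw [hF]
    simp only [hpI0, hHs]
  have ea' : G (1,0) = G (0,0) := by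
    have h0 : G (1,0) - G (0,0) = 0 := by rw [ea]; ring
    exact sub_eq_zero.1 h0
  -- (b) top edge: G (1,1) = G (0,1)
  have eb : G (1, 1) - G (0,1) = G (0,1) - G (0,1) := by
    apply lift_const_diff (fun s => G (s, 1)) (fun _ => G (0,1))
      (hGc.comp (continuous_id.prodMk continuous_const)).continuousOn
      continuousOn_const
    intro s hs
    rw [hGe s hs 1 h1m, hGe 0 h0m 1 h1m]
    show F (s, 1) = F (0, 1)
    rw [hF]
    simp only [hpI1, hHt]
  have eb' : G (1,1) = G (0,1) := by
    have h0 : G (1,1) - G (0,1) = 0 := by rw [eb]; ring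
    exact sub_eq_zero.1 h0
  -- ne lemmas
  have hne₁ : ∀ t : unitInterval, γ₁ t ≠ p := fun t h => hp (h ▸ Or.inl (hγ₁ t))
  have hne₂ : ∀ t : unitInterval, γ₂ t ≠ p := fun t h => hp (h ▸ Or.inr (hγ₂ t))
  -- (c) left edge: lift along γ₁ with branch l₁
  have ec : G (0, 1) - l₁ p (γ₁ (pI 1)) = G (0, 0) - l₁ p (γ₁ (pI 0)) := by
    apply lift_const_diff (fun t => G (0, t)) (fun t => l₁ p (γ₁ (pI t)))
      (hGc.comp (continuous_const.prodMk continuous_id)).continuousOn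
    · intro t _
      apply ContinuousAt.continuousWithinAt
      have h1 : ContinuousAt (fun t : ℝ => γ₁ (pI t)) t :=
        (γ₁.continuous.comp continuous_projIcc).continuousAt
      by_cases him : (γ₁ (pI t)).im = p.im
      · have := ContinuousAt.comp (g := l₁ p) (f := fun t : ℝ => γ₁ (pI t)) (x := t)
          (l₁_continuousAt (Or.inr (h₁left _ (hγ₁ _) him))) h1
        exact this
      · have := ContinuousAt.comp (g := l₁ p) (f := fun t : ℝ => γ₁ (pI t)) (x := t)
          (l₁_continuousAt (Or.inl him)) h1
        exact this
    · intro t ht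
      rw [hGe 0 h0m t ht, exp_l₁ (hne₁ (pI t))]
      show ((H (pI 0, pI t) : ↥E) : ℂ) - p = γ₁ (pI t) - p
      rw [hpI0, hH0]
      rfl
  -- (d) right edge: lift along γ₂ with branch l₂
  have ed : G (1, 1) - l₂ p (γ₂ (pI 1)) = G (1, 0) - l₂ p (γ₂ (pI 0)) := by
    apply lift_const_diff (fun t => G (1, t)) (fun t => l₂ p (γ₂ (pI t)))
      (hGc.comp (continuous_const.prodMk continuous_id)).continuousOn
    · intro t _
      apply ContinuousAt.continuousWithinAt
      have h1 : ContinuousAt (fun t : ℝ => γ₂ (pI t)) t :=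
        (γ₂.continuous.comp continuous_projIcc).continuousAt
      by_cases him : (γ₂ (pI t)).im = p.im
      · have := ContinuousAt.comp (g := l₂ p) (f := fun t : ℝ => γ₂ (pI t)) (x := t)
          (l₂_continuousAt (Or.inr (h₂right _ (hγ₂ _) him))) h1
        exact this
      · have := ContinuousAt.comp (g := l₂ p) (f := fun t : ℝ => γ₂ (pI t)) (x := t)
          (l₂_continuousAt (Or.inl him)) h1
        exact this
    · intro t ht
      rw [hGe 1 h1m t ht, exp_l₂ (hne₂ (pI t))]
      show ((H (pI 1, pI t) : ↥E) : ℂ) - p = γ₂ (pI t) - p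
      rw [hpI1, hH1]
      rfl
  -- combine
  rw [hpI0, hpI1] at ec ed
  have hγ₁0 : γ₁ (0 : unitInterval) = w₁ := γ₁.source
  have hγ₁1 : γ₁ (1 : unitInterval) = w₃ := γ₁.target
  have hγ₂0 : γ₂ (0 : unitInterval) = w₁ := γ₂.source
  have hγ₂1 : γ₂ (1 : unitInterval) = w₃ := γ₂.target
  rw [hγ₁0, hγ₁1] at ec
  rw [hγ₂0, hγ₂1] at ed
  have hl₃ : l₁ p w₃ = l₂ p w₃ := l₁_eq_l₂_above h₃im
  have hl₁ : l₁ p w₁ = l₂ p w₁ + 2 * Real.pi * I := l₁_eq_l₂_below h₁im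
  have hfin : (2 : ℂ) * Real.pi * I = 0 := by
    have hthis := ec
    rw [hl₃, hl₁] at hthis
    linear_combination hthis - ed + eb' - ea'
  have hπ0 : (Real.pi : ℂ) = 0 := by
    rcases mul_eq_zero.1 hfin with h | h
    · rcases mul_eq_zero.1 h with h' | h'
      · exact absurd h' two_ne_zero
      · exact h'
    · exact absurd h Complex.I_ne_zero
  rw [Complex.ofReal_eq_zero] at hπ0
  exact Real.pi_ne_zero hπ0

lemma lemA (E₁ E₂ : Set ℂ)
    (h₁p : IsPathConnected E₁) (h₂p : IsPathConnected E₂)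
    (h₁s : ∀ y, OrdConnected (sl E₁ y)) (h₂s : ∀ y, OrdConnected (sl E₂ y))
    (h₁so : ∀ y, IsOpen (sl E₁ y)) (h₂so : ∀ y, IsOpen (sl E₂ y))
    (h₁P : OrdConnected (Py E₁)) (h₂P : OrdConnected (Py E₂))
    (hsc : SimplyConnectedSpace ↥(E₁ ∪ E₂)) :
    OrdConnected (Py (E₁ ∩ E₂)) := by
  constructor
  rintro y₁ hy₁ y₃ hy₃ y₂ hy₂
  by_cases hint : (sl E₁ y₂ ∩ sl E₂ y₂).Nonempty
  · obtain ⟨x, hx1, hx2⟩ := hint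
    exact ⟨(x:ℂ) + y₂*I, ⟨hx1, hx2⟩, by simp⟩
  exfalso
  obtain ⟨w₁, hw₁, hw₁im⟩ := hy₁
  obtain ⟨w₃, hw₃, hw₃im⟩ := hy₃
  have hstrict₁ : y₁ < y₂ := by
    rcases eq_or_lt_of_le hy₂.1 with h | h
    · exact absurd ⟨w₁.re, by rw [← h, ← hw₁im]; exact re_mem_sl hw₁.1,
        by rw [← h, ← hw₁im]; exact re_mem_sl hw₁.2⟩ hint
    · exact h
  have hstrict₃ : y₂ < y₃ := by
    rcases eq_or_lt_of_le hy₂.2 with h | h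
    · exact absurd ⟨w₃.re, by rw [h, ← hw₃im]; exact re_mem_sl hw₃.1,
        by rw [h, ← hw₃im]; exact re_mem_sl hw₃.2⟩ hint
    · exact h
  -- slices at y₂ are nonempty
  have hy₂P₁ : y₂ ∈ Py E₁ :=
    h₁P.out ⟨w₁, hw₁.1, hw₁im⟩ ⟨w₃, hw₃.1, hw₃im⟩ hy₂
  have hy₂P₂ : y₂ ∈ Py E₂ :=
    h₂P.out ⟨w₁, hw₁.2, hw₁im⟩ ⟨w₃, hw₃.2, hw₃im⟩ hy₂
  have hAne : (sl E₁ y₂).Nonempty := by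
    obtain ⟨z, hz, hzim⟩ := hy₂P₁
    exact ⟨z.re, by rw [← hzim]; exact re_mem_sl hz⟩
  have hBne : (sl E₂ y₂).Nonempty := by
    obtain ⟨z, hz, hzim⟩ := hy₂P₂
    exact ⟨z.re, by rw [← hzim]; exact re_mem_sl hz⟩
  have hdisj : sl E₁ y₂ ∩ sl E₂ y₂ = ∅ := not_nonempty_iff_eq_empty.1 hint
  obtain ⟨xa, hxa⟩ := hAne
  obtain ⟨xb, hxb⟩ := hBne
  have him₁ : w₁.im < y₂ := hw₁im ▸ hstrict₁
  have him₃ : y₂ < w₃.im := hw₃im ▸ hstrict₃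
  rcases ordConn_disjoint_order (h₁s y₂) (h₂s y₂) hdisj xa hxa xb hxb with hord | hord
  · obtain ⟨x₀, hx₀A, hx₀B⟩ := gap_point (h₁s y₂) (h₂s y₂) (h₁so y₂) (h₂so y₂)
      ⟨xa, hxa⟩ ⟨xb, hxb⟩ hord
    set p : ℂ := (x₀ : ℂ) + y₂ * I with hp'
    have hpre : p.re = x₀ := by simp [hp']
    have hpim : p.im = y₂ := by simp [hp']
    have hp : p ∉ E₁ ∪ E₂ := by
      rintro (h | h)
      · exact lt_irrefl x₀ (hx₀A x₀ h)
      · exact lt_irrefl x₀ (hx₀B x₀ h)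
    refine core_contradiction E₁ E₂ h₁p h₂p p hp ?_ ?_ w₁ w₃ hw₁ hw₃
      (by rw [hpim]; exact him₁) (by rw [hpim]; exact him₃) hsc
    · intro z hz hzim
      rw [hpre]
      have := re_mem_sl hz
      rw [hzim, hpim] at this
      exact hx₀A _ this
    · intro z hz hzim
      rw [hpre]
      have := re_mem_sl hz
      rw [hzim, hpim] at this
      exact hx₀B _ this
  · obtain ⟨x₀, hx₀B, hx₀A⟩ := gap_point (h₂s y₂) (h₁s y₂) (h₂so y₂) (h₁so y₂)
      ⟨xb, hxb⟩ ⟨xa, hxa⟩ (fun b hb a ha => hord a ha b hb)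
    set p : ℂ := (x₀ : ℂ) + y₂ * I with hp'
    have hpre : p.re = x₀ := by simp [hp']
    have hpim : p.im = y₂ := by simp [hp']
    have hp : p ∉ E₂ ∪ E₁ := by
      rintro (h | h)
      · exact lt_irrefl x₀ (hx₀B x₀ h)
      · exact lt_irrefl x₀ (hx₀A x₀ h)
    have hsc' : SimplyConnectedSpace ↥(E₂ ∪ E₁) := by
      rw [Set.union_comm]; exact hsc
    refine core_contradiction E₂ E₁ h₂p h₁p p hp ?_ ?_ w₁ w₃ ⟨hw₁.2, hw₁.1⟩ ⟨hw₃.2, hw₃.1⟩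
      (by rw [hpim]; exact him₁) (by rw [hpim]; exact him₃) hsc'
    · intro z hz hzim
      rw [hpre]
      have := re_mem_sl hz
      rw [hzim, hpim] at this
      exact hx₀B _ this
    · intro z hz hzim
      rw [hpre]
      have := re_mem_sl hz
      rw [hzim, hpim] at this
      exact hx₀A _ this

section CMP
variable {q : ℂ → ℂ} {D S T : Set ℂ}

lemma contU (hD : IsOpen D) (hq : ContinuousOn q D) {x y : ℝ} (h : (x:ℂ) + y*I ∈ D) :
    ContinuousAt (fun y' : ℝ => (q ((x:ℂ) + y'*I)).re) y := by
  have h1 : Filter.Tendsto q (nhds ((x:ℂ) + y*I)) (nhds (q ((x:ℂ) + y*I))) :=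
    hq.continuousAt (hD.mem_nhds h)
  have h2 : Filter.Tendsto (fun y' : ℝ => (x:ℂ) + y'*I) (nhds y) (nhds ((x:ℂ) + y*I)) :=
    ((by fun_prop : Continuous (fun y' : ℝ => (x:ℂ) + y'*I)).tendsto y)
  exact (Complex.continuous_re.tendsto _).comp (h1.comp h2)

lemma contUx (hD : IsOpen D) (hq : ContinuousOn q D) {x y : ℝ} (h : (x:ℂ) + y*I ∈ D) :
    ContinuousAt (fun x' : ℝ => (q ((x':ℂ) + y*I)).re) x := by
  have h1 : Filter.Tendsto q (nhds ((x:ℂ) + y*I)) (nhds (q ((x:ℂ) + y*I))) :=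
    hq.continuousAt (hD.mem_nhds h)
  have h2 : Filter.Tendsto (fun x' : ℝ => (x':ℂ) + y*I) (nhds x) (nhds ((x:ℂ) + y*I)) :=
    ((by fun_prop : Continuous (fun x' : ℝ => (x':ℂ) + y*I)).tendsto x)
  exact (Complex.continuous_re.tendsto _).comp (h1.comp h2)

/-- the pinch comparison lemma -/
lemma cmp_pinch (hD : IsOpen D) (hq : ContinuousOn q D)
    (hdiff : ∀ z ∈ D, DifferentiableAt ℝ q z)
    (hJ : ∀ z ∈ D, 0 < LinearMap.det (fderiv ℝ q z).toLinearMap)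
    (him : ∀ z ∈ D, (q z).im = z.im)
    (hSo : IsOpen S) (hTo : IsOpen T)
    (hS : S ⊆ D) (hT : T ⊆ D) (hSx : CvxRe S) (hTx : CvxRe T)
    (a₀ : ℝ) (l : Filter ℝ) [hlne : l.NeBot] (hl : l ≤ nhds a₀)
    (hov : ∀ᶠ y in l, (sl S y ∩ sl T y).Nonempty)
    {x x' : ℝ} (hx : x ∈ sl S a₀) (hx' : x' ∈ sl T a₀) (hxx : x < x') :
    (q ((x:ℂ) + a₀*I)).re ≤ (q ((x':ℂ) + a₀*I)).re := by
  have hxev : ∀ᶠ y in l, x ∈ sl S y := by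
    apply hl
    have hop : IsOpen {y : ℝ | (x:ℂ) + y*I ∈ S} := hSo.preimage (by fun_prop)
    exact hop.mem_nhds hx
  have hx'ev : ∀ᶠ y in l, x' ∈ sl T y := by
    apply hl
    have hop : IsOpen {y : ℝ | (x':ℂ) + y*I ∈ T} := hTo.preimage (by fun_prop)
    exact hop.mem_nhds hx'
  have hle : ∀ᶠ (y : ℝ) in l, (q ((x:ℂ) + y*I)).re ≤ (q ((x':ℂ) + y*I)).re := by
    filter_upwards [hxev, hx'ev, hov] with y hxy hx'y hρ
    obtain ⟨ρ, hρS, hρT⟩ := hρ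
    rcases le_or_gt ρ x with h1 | h1
    · -- x ∈ [ρ, x'] ⊆ sl T y
      have hxT : x ∈ sl T y := (sl_ordConnected hTx y).out hρT hx'y ⟨h1, hxx.le⟩
      have hseg : ∀ t ∈ Icc x x', (t:ℂ) + y*I ∈ D := fun t ht =>
        hT ((sl_ordConnected hTx y).out hxT hx'y ht)
      exact (mono_u hD hdiff hJ him hxx hseg).le
    rcases le_or_gt x' ρ with h2 | h2
    · have hx'S : x' ∈ sl S y := (sl_ordConnected hSx y).out hxy hρS ⟨hxx.le, h2⟩
      have hseg : ∀ t ∈ Icc x x', (t:ℂ) + y*I ∈ D := fun t ht =>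
        hS ((sl_ordConnected hSx y).out hxy hx'S ht)
      exact (mono_u hD hdiff hJ him hxx hseg).le
    · have hseg1 : ∀ t ∈ Icc x ρ, (t:ℂ) + y*I ∈ D := fun t ht =>
        hS ((sl_ordConnected hSx y).out hxy hρS ht)
      have hseg2 : ∀ t ∈ Icc ρ x', (t:ℂ) + y*I ∈ D := fun t ht =>
        hT ((sl_ordConnected hTx y).out hρT hx'y ht)
      exact ((mono_u hD hdiff hJ him h1 hseg1).trans
        (mono_u hD hdiff hJ him h2 hseg2)).le
  have ht1 : Filter.Tendsto (fun y : ℝ => (q ((x:ℂ) + y*I)).re) l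
      (nhds ((q ((x:ℂ) + a₀*I)).re)) :=
    ((contU hD hq (hS hx)).tendsto).mono_left hl
  have ht2 : Filter.Tendsto (fun y : ℝ => (q ((x':ℂ) + y*I)).re) l
      (nhds ((q ((x':ℂ) + a₀*I)).re)) :=
    ((contU hD hq (hT hx')).tendsto).mono_left hl
  exact le_of_tendsto_of_tendsto ht1 ht2 hle

/-- openness of slices of images -/
lemma image_slice_isOpen (hD : IsOpen D) (hq : ContinuousOn q D)
    (hdiff : ∀ z ∈ D, DifferentiableAt ℝ q z)
    (hJ : ∀ z ∈ D, 0 < LinearMap.det (fderiv ℝ q z).toLinearMap)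
    (him : ∀ z ∈ D, (q z).im = z.im)
    (hS : S ⊆ D) (hSo : IsOpen S) (hSx : CvxRe S) (y : ℝ) :
    IsOpen ((fun x : ℝ => (q ((x:ℂ) + y*I)).re) '' sl S y) := by
  rw [isOpen_iff_mem_nhds]
  rintro X ⟨x, hx, rfl⟩
  obtain ⟨δ, hδ, hball⟩ := Metric.isOpen_iff.1 (sl_isOpen hSo y) x hx
  have hIcc : Icc (x - δ/2) (x + δ/2) ⊆ sl S y := by
    intro t ht
    apply hball
    rw [mem_ball, Real.dist_eq, abs_sub_lt_iff]
    constructor <;> [linarith [ht.2]; linarith [ht.1]]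
  have hseg : ∀ t ∈ Icc (x - δ/2) (x + δ/2), (t:ℂ) + y*I ∈ D := fun t ht => hS (hIcc ht)
  have hfc : ContinuousOn (fun x' : ℝ => (q ((x':ℂ) + y*I)).re) (Icc (x - δ/2) (x + δ/2)) :=
    fun t ht => (contUx hD hq (hseg t ht)).continuousWithinAt
  have hlt1 : (q (((x - δ/2 : ℝ):ℂ) + y*I)).re < (q ((x:ℂ) + y*I)).re :=
    mono_u hD hdiff hJ him (by linarith)
      (fun t ht => hseg t ⟨ht.1, by linarith [ht.2]⟩)
  have hlt2 : (q ((x:ℂ) + y*I)).re < (q (((x + δ/2 : ℝ):ℂ) + y*I)).re :=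
    mono_u hD hdiff hJ him (by linarith)
      (fun t ht => hseg t ⟨by linarith [ht.1], ht.2⟩)
  apply Filter.mem_of_superset (Ioo_mem_nhds hlt1 hlt2)
  intro ξ hξ
  have := intermediate_value_Icc (by linarith : x - δ/2 ≤ x + δ/2) hfc
  have hmem := this (Ioo_subset_Icc_self hξ)
  obtain ⟨t, ht, hft⟩ := hmem
  exact ⟨t, hIcc ht, hft⟩

/-- slices of the image equal image of slices -/
lemma sl_image (hS : S ⊆ D) (him : ∀ z ∈ D, (q z).im = z.im) (y : ℝ) :
    sl (q '' S) y = (fun x : ℝ => (q ((x:ℂ) + y*I)).re) '' sl S y := by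
  ext X
  constructor
  · rintro hX
    rw [mem_sl_iff] at hX
    obtain ⟨ζ, hζ, hqζ⟩ := hX
    have hζim : ζ.im = y := by
      have h1 := him ζ (hS hζ)
      rw [hqζ] at h1
      simpa using h1.symm
    refine ⟨ζ.re, by rw [← hζim]; exact re_mem_sl hζ, ?_⟩
    show (q ((ζ.re:ℂ) + y*I)).re = X
    have : (ζ.re : ℂ) + y*I = ζ := by rw [← hζim, Complex.re_add_im]
    rw [this, hqζ]
    simp
  · rintro ⟨x, hx, rfl⟩
    rw [mem_sl_iff]
    refine ⟨(x:ℂ) + y*I, hx, ?_⟩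
    show q ((x:ℂ) + y*I) = ((fun x : ℝ => (q ((x:ℂ) + y*I)).re) x : ℝ) + (y:ℂ)*I
    apply Complex.ext
    · simp
    · rw [him _ (hS hx)]; simp

/-- projections of image equal projections -/
lemma Py_image (hS : S ⊆ D) (him : ∀ z ∈ D, (q z).im = z.im) :
    Py (q '' S) = Py S := by
  ext a
  constructor
  · rintro ⟨w, ⟨z, hz, rfl⟩, hwa⟩
    exact ⟨z, hz, by rw [← hwa, him z (hS hz)]⟩
  · rintro ⟨z, hz, hza⟩
    exact ⟨q z, ⟨z, hz, rfl⟩, by rw [him z (hS hz)]; exact hza⟩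
end CMP

lemma ordConn_image {f : ℝ → ℝ} {A : Set ℝ} (hA : OrdConnected A) (hf : ContinuousOn f A) :
    OrdConnected (f '' A) := ((hA.isPreconnected).image f hf).ordConnected


section main
variable {q : ℂ → ℂ} {D₁ D₂ : Set ℂ}

/-- no cross-collision at a pinch height. -/
lemma no_collision_at
    (h₁o : IsOpen D₁) (h₂o : IsOpen D₂) (h₁x : CvxRe D₁) (h₂x : CvxRe D₂)
    (hq : ContinuousOn q (D₁ ∪ D₂))
    (hdiff : ∀ z ∈ D₁ ∪ D₂, DifferentiableAt ℝ q z)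
    (hJ : ∀ z ∈ D₁ ∪ D₂, 0 < LinearMap.det (fderiv ℝ q z).toLinearMap)
    (him : ∀ z ∈ D₁ ∪ D₂, (q z).im = z.im)
    (a₀ : ℝ) (l : Filter ℝ) [hlne : l.NeBot] (hl : l ≤ nhds a₀)
    (hov : ∀ᶠ (y : ℝ) in l, (sl D₁ y ∩ sl D₂ y).Nonempty)
    (hdisj : sl D₁ a₀ ∩ sl D₂ a₀ = ∅)
    (ha₀G' : a₀ ∈ Py (q '' D₁ ∩ q '' D₂)) : False := by
  have hDo : IsOpen (D₁ ∪ D₂) := h₁o.union h₂o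
  have hsub₁ : D₁ ⊆ D₁ ∪ D₂ := subset_union_left
  have hsub₂ : D₂ ⊆ D₁ ∪ D₂ := subset_union_right
  obtain ⟨w, ⟨hw1, hw2⟩, hwim⟩ := ha₀G'
  obtain ⟨z₁, hz₁, hqz₁⟩ := hw1
  obtain ⟨z₂, hz₂, hqz₂⟩ := hw2
  have hz₁im : z₁.im = a₀ := by rw [← him z₁ (hsub₁ hz₁), hqz₁]; exact hwim
  have hz₂im : z₂.im = a₀ := by rw [← him z₂ (hsub₂ hz₂), hqz₂]; exact hwim
  have hx₁ : z₁.re ∈ sl D₁ a₀ := by rw [← hz₁im]; exact re_mem_sl hz₁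
  have hx₂ : z₂.re ∈ sl D₂ a₀ := by rw [← hz₂im]; exact re_mem_sl hz₂
  have hz₁eq : (z₁.re : ℂ) + a₀*I = z₁ := by rw [← hz₁im]; exact Complex.re_add_im z₁
  have hz₂eq : (z₂.re : ℂ) + a₀*I = z₂ := by rw [← hz₂im]; exact Complex.re_add_im z₂
  have hUeq : (q ((z₁.re:ℂ) + a₀*I)).re = (q ((z₂.re:ℂ) + a₀*I)).re := by
    rw [hz₁eq, hz₂eq, hqz₁, hqz₂]
  obtain ⟨ε₁, hε₁, hb₁⟩ := Metric.isOpen_iff.1 (sl_isOpen h₁o a₀) _ hx₁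
  obtain ⟨ε₂, hε₂, hb₂⟩ := Metric.isOpen_iff.1 (sl_isOpen h₂o a₀) _ hx₂
  rcases ordConn_disjoint_order (sl_ordConnected h₁x a₀) (sl_ordConnected h₂x a₀)
    hdisj _ hx₁ _ hx₂ with hord | hord
  · -- sl D₁ a₀ entirely left of sl D₂ a₀
    set x₁' := z₁.re + ε₁/2 with hx₁'def
    set x₂' := z₂.re - ε₂/2 with hx₂'def
    have hx₁' : x₁' ∈ sl D₁ a₀ := hb₁ (by
      rw [mem_ball, Real.dist_eq, hx₁'def, add_sub_cancel_left, abs_of_pos (by linarith)]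
      linarith)
    have hx₂' : x₂' ∈ sl D₂ a₀ := hb₂ (by
      rw [mem_ball, Real.dist_eq, hx₂'def]
      rw [show z₂.re - ε₂/2 - z₂.re = -(ε₂/2) by ring, abs_neg, abs_of_pos (by linarith)]
      linarith)
    have hm₁ : (q ((z₁.re:ℂ) + a₀*I)).re < (q ((x₁':ℂ) + a₀*I)).re :=
      mono_u hDo hdiff hJ him (by rw [hx₁'def]; linarith)
        (fun t ht => hsub₁ ((sl_ordConnected h₁x a₀).out hx₁ hx₁' ht))
    have hm₂ : (q ((x₂':ℂ) + a₀*I)).re < (q ((z₂.re:ℂ) + a₀*I)).re :=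
      mono_u hDo hdiff hJ him (by rw [hx₂'def]; linarith)
        (fun t ht => hsub₂ ((sl_ordConnected h₂x a₀).out hx₂' hx₂ ht))
    have hlt : x₁' < x₂' := hord _ hx₁' _ hx₂'
    have hcmp := cmp_pinch hDo hq hdiff hJ him h₁o h₂o hsub₁ hsub₂ h₁x h₂x a₀ l hl hov
      hx₁' hx₂' hlt
    linarith
  · -- sl D₂ a₀ entirely left of sl D₁ a₀
    set x₁' := z₁.re - ε₁/2 with hx₁'def
    set x₂' := z₂.re + ε₂/2 with hx₂'def
    have hx₁' : x₁' ∈ sl D₁ a₀ := hb₁ (by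
      rw [mem_ball, Real.dist_eq, hx₁'def]
      rw [show z₁.re - ε₁/2 - z₁.re = -(ε₁/2) by ring, abs_neg, abs_of_pos (by linarith)]
      linarith)
    have hx₂' : x₂' ∈ sl D₂ a₀ := hb₂ (by
      rw [mem_ball, Real.dist_eq, hx₂'def, add_sub_cancel_left, abs_of_pos (by linarith)]
      linarith)
    have hm₁ : (q ((x₁':ℂ) + a₀*I)).re < (q ((z₁.re:ℂ) + a₀*I)).re :=
      mono_u hDo hdiff hJ him (by rw [hx₁'def]; linarith)
        (fun t ht => hsub₁ ((sl_ordConnected h₁x a₀).out hx₁' hx₁ ht))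
    have hm₂ : (q ((z₂.re:ℂ) + a₀*I)).re < (q ((x₂':ℂ) + a₀*I)).re :=
      mono_u hDo hdiff hJ him (by rw [hx₂'def]; linarith)
        (fun t ht => hsub₂ ((sl_ordConnected h₂x a₀).out hx₂ hx₂' ht))
    have hlt : x₂' < x₁' := hord _ hx₁' _ hx₂'
    have hov' : ∀ᶠ (y : ℝ) in l, (sl D₂ y ∩ sl D₁ y).Nonempty :=
      hov.mono (fun y ⟨x, h1, h2⟩ => ⟨x, h2, h1⟩)
    have hcmp := cmp_pinch hDo hq hdiff hJ him h₂o h₁o hsub₂ hsub₁ h₂x h₁x a₀ l hl hov'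
      hx₂' hx₁' hlt
    linarith
end main

theorem simply_connected_implies_projection_eq
    (D₁ D₂ : Set ℂ) (h₁o : IsOpen D₁) (h₁c : IsConnected D₁) (h₁x : CvxRe D₁)
    (h₂o : IsOpen D₂) (h₂c : IsConnected D₂) (h₂x : CvxRe D₂)
    (hne : (D₁ ∩ D₂).Nonempty)
    (q : ℂ → ℂ) (hq : ContinuousOn q (D₁ ∪ D₂))
    (hdiff : ∀ z ∈ D₁ ∪ D₂, DifferentiableAt ℝ q z)
    (hJ : ∀ z ∈ D₁ ∪ D₂, 0 < LinearMap.det (fderiv ℝ q z).toLinearMap)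
    (hloc : LocInjOn q (D₁ ∪ D₂))
    (him : ∀ z ∈ D₁ ∪ D₂, (q z).im = z.im)
    (hsc₁ : SimplyConnectedSpace ↥(D₁ ∪ D₂))
    (hsc₂ : SimplyConnectedSpace ↥(q '' D₁ ∪ q '' D₂)) :
    Py (D₁ ∩ D₂) = Py (q '' D₁ ∩ q '' D₂) := by
  have hDo : IsOpen (D₁ ∪ D₂) := h₁o.union h₂o
  have hsub₁ : D₁ ⊆ D₁ ∪ D₂ := subset_union_left
  have hsub₂ : D₂ ⊆ D₁ ∪ D₂ := subset_union_right
  have easy : Py (D₁ ∩ D₂) ⊆ Py (q '' D₁ ∩ q '' D₂) := by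
    rintro a ⟨z, hz, hza⟩
    exact ⟨q z, ⟨⟨z, hz.1, rfl⟩, ⟨z, hz.2, rfl⟩⟩, by rw [him z (hsub₁ hz.1)]; exact hza⟩
  apply Set.Subset.antisymm easy
  intro a ha'
  -- structure of the image sets
  have h₁pc : IsPathConnected (q '' D₁) :=
    (h₁o.isConnected_iff_isPathConnected.1 h₁c).image' (hq.mono hsub₁)
  have h₂pc : IsPathConnected (q '' D₂) :=
    (h₂o.isConnected_iff_isPathConnected.1 h₂c).image' (hq.mono hsub₂)
  have hsl₁ : ∀ y, OrdConnected (sl (q '' D₁) y) := fun y => by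
    rw [sl_image hsub₁ him y]
    exact ordConn_image (sl_ordConnected h₁x y)
      (fun x hx => (contUx hDo hq (hsub₁ hx)).continuousWithinAt)
  have hsl₂ : ∀ y, OrdConnected (sl (q '' D₂) y) := fun y => by
    rw [sl_image hsub₂ him y]
    exact ordConn_image (sl_ordConnected h₂x y)
      (fun x hx => (contUx hDo hq (hsub₂ hx)).continuousWithinAt)
  have hslo₁ : ∀ y, IsOpen (sl (q '' D₁) y) := fun y => by
    rw [sl_image hsub₁ him y]
    exact image_slice_isOpen hDo hq hdiff hJ him hsub₁ h₁o h₁x y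
  have hslo₂ : ∀ y, IsOpen (sl (q '' D₂) y) := fun y => by
    rw [sl_image hsub₂ him y]
    exact image_slice_isOpen hDo hq hdiff hJ him hsub₂ h₂o h₂x y
  have hPy₁ : OrdConnected (Py (q '' D₁)) := by
    rw [Py_image hsub₁ him]; exact Py_ordConnected h₁c.isPreconnected
  have hPy₂ : OrdConnected (Py (q '' D₂)) := by
    rw [Py_image hsub₂ him]; exact Py_ordConnected h₂c.isPreconnected
  have hG' : OrdConnected (Py (q '' D₁ ∩ q '' D₂)) :=
    lemA _ _ h₁pc h₂pc hsl₁ hsl₂ hslo₁ hslo₂ hPy₁ hPy₂ hsc₂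
  by_cases hmem : a ∈ Py (D₁ ∩ D₂)
  · exact hmem
  exfalso
  obtain ⟨ζ, hζ⟩ := hne
  set b := ζ.im with hbdef
  have hbG : b ∈ Py (D₁ ∩ D₂) := ⟨ζ, hζ, rfl⟩
  have hbG' : b ∈ Py (q '' D₁ ∩ q '' D₂) := easy hbG
  have hGopen : IsOpen (Py (D₁ ∩ D₂)) := Py_isOpen (h₁o.inter h₂o)
  rcases lt_trichotomy b a with hba | heq | hab
  · -- b < a : pinch from below
    set T := {y : ℝ | y ∈ Icc b a ∧ Icc b y ⊆ Py (D₁ ∩ D₂)} with hT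
    have hbT : b ∈ T := ⟨⟨le_refl b, hba.le⟩, fun t ht => by
      have htb : t = b := le_antisymm ht.2 ht.1
      rw [htb]; exact hbG⟩
    have hTbdd : BddAbove T := ⟨a, fun y hy => hy.1.2⟩
    set a₀ := sSup T with ha₀def
    have ha₀mem : a₀ ∈ Icc b a := ⟨le_csSup hTbdd hbT, csSup_le ⟨b, hbT⟩ (fun y hy => hy.1.2)⟩
    have hIco : Ico b a₀ ⊆ Py (D₁ ∩ D₂) := by
      intro y hy
      obtain ⟨y', hy'T, hyy'⟩ := exists_lt_of_lt_csSup ⟨b, hbT⟩ hy.2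
      exact hy'T.2 ⟨hy.1, hyy'.le⟩
    have ha₀G : a₀ ∉ Py (D₁ ∩ D₂) := by
      intro h
      obtain ⟨ε, hε, hball⟩ := Metric.isOpen_iff.1 hGopen a₀ h
      have ha₀a : a₀ < a := lt_of_le_of_ne ha₀mem.2 (fun hh => hmem (hh ▸ h))
      set y' := min a (a₀ + ε/2) with hy'def
      have hy'T : y' ∈ T := by
        refine ⟨⟨le_min hba.le (by linarith [ha₀mem.1]), min_le_left _ _⟩, ?_⟩
        intro t ht
        rcases lt_or_ge t a₀ with h1 | h1
        · exact hIco ⟨ht.1, h1⟩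
        · apply hball
          rw [mem_ball, Real.dist_eq, abs_sub_lt_iff]
          have hty' : t ≤ y' := ht.2
          have : y' ≤ a₀ + ε/2 := min_le_right _ _
          constructor <;> linarith
      have h1 := le_csSup hTbdd hy'T
      have h2 : a₀ < y' := lt_min ha₀a (by linarith)
      linarith
    have hba₀ : b < a₀ := lt_of_le_of_ne ha₀mem.1 (fun hh => ha₀G (hh ▸ hbG))
    have ha₀G' : a₀ ∈ Py (q '' D₁ ∩ q '' D₂) := hG'.out hbG' ha' ha₀mem
    have hdisj : sl D₁ a₀ ∩ sl D₂ a₀ = ∅ := by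
      rw [eq_empty_iff_forall_notMem]
      rintro x ⟨hxa, hxb⟩
      exact ha₀G ⟨(x:ℂ) + a₀*I, ⟨hxa, hxb⟩, by simp⟩
    have hov : ∀ᶠ (y : ℝ) in nhdsWithin a₀ (Iio a₀), (sl D₁ y ∩ sl D₂ y).Nonempty := by
      apply Filter.mem_of_superset (Ioo_mem_nhdsLT_of_mem (⟨hba₀, le_refl a₀⟩ : a₀ ∈ Ioc b a₀))
      intro y hy
      obtain ⟨z, hz, hzim⟩ := hIco ⟨hy.1.le, hy.2⟩
      exact ⟨z.re, by rw [← hzim]; exact re_mem_sl hz.1, by rw [← hzim]; exact re_mem_sl hz.2⟩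
    exact no_collision_at h₁o h₂o h₁x h₂x hq hdiff hJ him a₀ _ nhdsWithin_le_nhds hov hdisj ha₀G'
  · exact hmem (heq ▸ hbG)
  · -- a < b : pinch from above
    set T := {y : ℝ | y ∈ Icc a b ∧ Icc y b ⊆ Py (D₁ ∩ D₂)} with hT
    have hbT : b ∈ T := ⟨⟨hab.le, le_refl b⟩, fun t ht => by
      have htb : t = b := le_antisymm ht.2 ht.1
      rw [htb]; exact hbG⟩
    have hTbdd : BddBelow T := ⟨a, fun y hy => hy.1.1⟩
    set a₀ := sInf T with ha₀def
    have ha₀mem : a₀ ∈ Icc a b := ⟨le_csInf ⟨b, hbT⟩ (fun y hy => hy.1.1), csInf_le hTbdd hbT⟩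
    have hIoc : Ioc a₀ b ⊆ Py (D₁ ∩ D₂) := by
      intro y hy
      obtain ⟨y', hy'T, hyy'⟩ := exists_lt_of_csInf_lt ⟨b, hbT⟩ hy.1
      exact hy'T.2 ⟨hyy'.le, hy.2⟩
    have ha₀G : a₀ ∉ Py (D₁ ∩ D₂) := by
      intro h
      obtain ⟨ε, hε, hball⟩ := Metric.isOpen_iff.1 hGopen a₀ h
      have ha₀a : a < a₀ := lt_of_le_of_ne ha₀mem.1 (fun hh => hmem (hh ▸ h))
      set y' := max a (a₀ - ε/2) with hy'def
      have hy'T : y' ∈ T := by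
        refine ⟨⟨le_max_left _ _, max_le hab.le (by linarith [ha₀mem.2])⟩, ?_⟩
        intro t ht
        rcases lt_or_ge a₀ t with h1 | h1
        · exact hIoc ⟨h1, ht.2⟩
        · apply hball
          rw [mem_ball, Real.dist_eq, abs_sub_lt_iff]
          have hty' : y' ≤ t := ht.1
          have : a₀ - ε/2 ≤ y' := le_max_right _ _
          constructor <;> linarith
      have h1 := csInf_le hTbdd hy'T
      have h2 : y' < a₀ := max_lt ha₀a (by linarith)
      linarith
    have hba₀ : a₀ < b := lt_of_le_of_ne ha₀mem.2 (fun hh => ha₀G (hh ▸ hbG))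
    have ha₀G' : a₀ ∈ Py (q '' D₁ ∩ q '' D₂) := hG'.out ha' hbG' ha₀mem
    have hdisj : sl D₁ a₀ ∩ sl D₂ a₀ = ∅ := by
      rw [eq_empty_iff_forall_notMem]
      rintro x ⟨hxa, hxb⟩
      exact ha₀G ⟨(x:ℂ) + a₀*I, ⟨hxa, hxb⟩, by simp⟩
    have hov : ∀ᶠ (y : ℝ) in nhdsWithin a₀ (Ioi a₀), (sl D₁ y ∩ sl D₂ y).Nonempty := by
      apply Filter.mem_of_superset (Ioo_mem_nhdsGT_of_mem (⟨le_refl a₀, hba₀⟩ : a₀ ∈ Ico a₀ b))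
      intro y hy
      obtain ⟨z, hz, hzim⟩ := hIoc ⟨hy.1, hy.2.le⟩
      exact ⟨z.re, by rw [← hzim]; exact re_mem_sl hz.1, by rw [← hzim]; exact re_mem_sl hz.2⟩
    exact no_collision_at h₁o h₂o h₁x h₂x hq hdiff hJ him a₀ _ nhdsWithin_le_nhds hov hdisj ha₀G'
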